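/- For all p ≥ 1 and 0 < ρ² < 1, the quantity τ² = ((1-ρ²)/ρ^{2(p+1)})·[ρ^{2(p+1)}(4 - (4p+3)ρ^{2p} + 4p·ρ^{2(p+1)} - ρ^{2(2p+1)}) + (1 - (p+1)ρ^{2p} + (p-1)ρ^{2(p+1)})²] satisfies τ² ≤ (1-ρ²)/ρ^{2(p+1)}. -/
import Mathlib

lemma geom_aux (x : ℝ) (hx0 : 0 ≤ x) (hx1 : x ≤ 1) (n : ℕ) :
    ((n : ℝ) + 1) * (1 - x) * x ^ n ≤ 1 - x ^ (n + 1) := by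
  induction n with
  | zero => simp
  | succ n ih =>
    have hxn : 0 ≤ x ^ n := pow_nonneg hx0 n
    have hxn1 : x ^ n * x ≤ 1 := by
      calc x ^ n * x ≤ 1 * 1 := by
            exact mul_le_mul (pow_le_one₀ hx0 hx1) hx1 hx0 zero_le_one
        _ = 1 := by ring
    push_cast
    rw [pow_succ, pow_succ, pow_succ] at *
    nlinarith [mul_le_mul_of_nonneg_left ih hx0,
      mul_nonneg (sub_nonneg.mpr hx1) (sub_nonneg.mpr hxn1)]

lemma geom_aux2 (x : ℝ) (hx0 : 0 ≤ x) (hx1 : x ≤ 1) (n : ℕ) :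
    1 - x ^ (n + 1) ≤ ((n : ℝ) + 1) * (1 - x) := by
  induction n with
  | zero => simp
  | succ n ih =>
    have hxn1 : x ^ (n + 1) ≤ 1 := pow_le_one₀ hx0 hx1
    push_cast
    rw [pow_succ]
    nlinarith

set_option maxHeartbeats 1000000 in
/-- The asymptotic variance τ² is at most (1-ρ²)/ρ^{2(p+1)}. -/
theorem tau_sq_le (p : ℕ) (hp : 1 ≤ p) (ρ : ℝ) (hρ0 : ρ ≠ 0) (hρ1 : |ρ| < 1)
    (τ2 : ℝ)
    (hτ : τ2 = ((1 - ρ ^ 2) / ρ ^ (2 * (p + 1))) *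
      (ρ ^ (2 * (p + 1)) * (4 - (4 * (p : ℝ) + 3) * ρ ^ (2 * p)
        + 4 * (p : ℝ) * ρ ^ (2 * (p + 1)) - ρ ^ (2 * (2 * p + 1)))
      + (1 - ((p : ℝ) + 1) * ρ ^ (2 * p) + ((p : ℝ) - 1) * ρ ^ (2 * (p + 1))) ^ 2)) :
    τ2 ≤ (1 - ρ ^ 2) / ρ ^ (2 * (p + 1)) := by
  have hx0 : (0 : ℝ) < ρ ^ 2 := by positivity
  have hx1 : ρ ^ 2 < 1 := by nlinarith [sq_abs ρ, abs_nonneg ρ]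
  set x : ℝ := ρ ^ 2 with hxdef
  have e1 : ρ ^ (2 * p) = x ^ p := pow_mul ρ 2 p
  have e2 : ρ ^ (2 * (p + 1)) = x ^ p * x := by
    rw [pow_mul, pow_succ]
  have e3 : ρ ^ (2 * (2 * p + 1)) = (x ^ p) ^ 2 * x := by
    rw [pow_mul]; ring
  set a : ℝ := x ^ p with hadef
  have ha0 : 0 < a := pow_pos hx0 p
  have ha1 : a ≤ 1 := pow_le_one₀ hx0.le hx1.le
  have hxa : x * a ≤ 1 := by nlinarith
  have hgeom : ((p : ℝ) + 1) * (1 - x) * a ≤ 1 - x * a := by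
    have := geom_aux x hx0.le hx1.le p
    rw [pow_succ] at this
    nlinarith
  have hgeom2 : 1 - x * a ≤ ((p : ℝ) + 1) * (1 - x) := by
    have := geom_aux2 x hx0.le hx1.le p
    rw [pow_succ] at this
    nlinarith
  rw [hτ, e1, e2, e3]
  have hC : 0 ≤ (1 - x) / (x ^ p * x) := by
    apply div_nonneg (by linarith) (by positivity)
  apply mul_le_of_le_one_right hC
  -- show the bracket is ≤ 1
  have ht0 : 0 ≤ ((p : ℝ) + 1) * (1 - x) * a := by
    have : (0:ℝ) ≤ (p : ℝ) + 1 := by positivity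
    nlinarith
  have ht1 : ((p : ℝ) + 1) * (1 - x) * a ≤ 1 := by nlinarith
  nlinarith [mul_nonneg ha0.le (sq_nonneg (1 - x * a)),
    mul_nonneg ht0 (sub_nonneg.mpr ht1),
    mul_le_mul_of_nonneg_left hgeom2 ha0.le,
    mul_nonneg hx0.le (mul_nonneg ha0.le ha0.le),
    sub_nonneg.mpr hxa]
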